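/- With notation as in the definition of U_m and χ: if a ≥ 1, p | β, p | γ₁, and c ≥ b, then u = [[p^{-1},0],[0,0]] lies in U_m; hence U_m ⊄ ker χ since χ(u) = ψ(-D/p) ≠ 1 when D is a p-adic unit. Therefore, if U_m ⊆ ker χ and c ≥ b, then at least one of p^a, β, γ₁ is a p-adic unit (i.e., either a = 0, or p ∤ β, or p ∤ γ₁). -/

import Mathlib

open scoped Matrix

/-- The matrix y = [[p^a, β],[0, p^b]]. -/
noncomputable def yMat (p a b : ℕ) [Fact p.Prime] (β : ℚ_[p]) : Matrix (Fin 2) (Fin 2) ℚ_[p] :=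
  !![(p : ℚ_[p]) ^ a, β; 0, (p : ℚ_[p]) ^ b]

/-- Membership in U_m: u is symmetric, u·y is integral, and the row vector
(γ₁,γ₂)·u·y lies in p^c ℤ_p ⊕ p^{min(b,c)} ℤ_p. -/
def memUm (p : ℕ) [Fact p.Prime] (a b c : ℕ) (β γ₁ γ₂ : ℚ_[p])
    (u : Matrix (Fin 2) (Fin 2) ℚ_[p]) : Prop :=
  u.IsSymm ∧ (∀ i j, ‖(u * yMat p a b β) i j‖ ≤ 1) ∧
  ‖γ₁ * (u * yMat p a b β) 0 0 + γ₂ * (u * yMat p a b β) 1 0‖ ≤ (p : ℝ) ^ (-(c : ℤ)) ∧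
  ‖γ₁ * (u * yMat p a b β) 0 1 + γ₂ * (u * yMat p a b β) 1 1‖ ≤ (p : ℝ) ^ (-(min b c : ℤ))

/-- χ(n(u)) = ψ(-D·u₁₁ + u₂₂). -/
noncomputable def chiUm (p : ℕ) [Fact p.Prime] (ψ : ℚ_[p] → ℂ) (D : ℚ_[p])
    (u : Matrix (Fin 2) (Fin 2) ℚ_[p]) : ℂ :=
  ψ (-D * u 0 0 + u 1 1)

/- STATEMENT 3: If a ≥ 1, p ∣ β, p ∣ γ₁ and c ≥ b, then [[p⁻¹,0],[0,0]] ∈ U_m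
and U_m ⊄ ker χ (since χ of it is ψ(-D/p) ≠ 1, D a unit).  Hence if
U_m ⊆ ker χ (and c ≥ b) then one of p^a, β, γ₁ is a p-adic unit. -/
theorem stmt3 {p : ℕ} [Fact p.Prime] (a b c : ℕ) (β γ₁ γ₂ D : ℚ_[p])
    (ψ : ℚ_[p] → ℂ)
    (hψ : ∀ x y, ψ (x + y) = ψ x * ψ y) (hψtriv : ∀ x, ψ x = 1 ↔ ‖x‖ ≤ 1)
    (hD : ‖D‖ = 1) (hca : c ≤ a) (hbc : b ≤ c)
    (hβc : ‖β‖ ≤ (p : ℝ) ^ (-(c : ℤ))) (hβint : ‖β‖ ≤ 1)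
    (hγ₁ : ‖γ₁‖ ≤ 1) (hγ₂ : ‖γ₂‖ ≤ 1) :
    ((1 ≤ a → ‖β‖ ≤ (p : ℝ)⁻¹ → ‖γ₁‖ ≤ (p : ℝ)⁻¹ →
      memUm p a b c β γ₁ γ₂ !![((p : ℚ_[p]))⁻¹, 0; 0, 0] ∧
      ¬ (∀ u, memUm p a b c β γ₁ γ₂ u → chiUm p ψ D u = 1))) ∧
    ((∀ u, memUm p a b c β γ₁ γ₂ u → chiUm p ψ D u = 1) →
      a = 0 ∨ ‖β‖ = 1 ∨ ‖γ₁‖ = 1) := by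
  have hp1 : (1:ℝ) < p := Nat.one_lt_cast.mpr (Fact.out (p := p.Prime)).one_lt
  have hp0 : (0:ℝ) < p := lt_trans one_pos hp1
  have hnormpinv : ‖((p:ℚ_[p]))⁻¹‖ = (p:ℝ) := by
    rw [norm_inv, Padic.norm_p, inv_inv]
  have key : 1 ≤ a → ‖β‖ ≤ (p : ℝ)⁻¹ → ‖γ₁‖ ≤ (p : ℝ)⁻¹ →
      memUm p a b c β γ₁ γ₂ !![((p : ℚ_[p]))⁻¹, 0; 0, 0] ∧
      ¬ (∀ u, memUm p a b c β γ₁ γ₂ u → chiUm p ψ D u = 1) := by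
    intro ha hβ hγ
    have hmul : !![((p : ℚ_[p]))⁻¹, 0; 0, 0] * yMat p a b β
        = !![((p:ℚ_[p]))⁻¹ * (p:ℚ_[p])^a, ((p:ℚ_[p]))⁻¹ * β; 0, 0] := by
      rw [yMat, Matrix.mul_fin_two]
      congr 1 <;> ring
    have h00 : ‖((p:ℚ_[p]))⁻¹ * (p:ℚ_[p])^a‖ = (p:ℝ)^(1 - (a:ℤ)) := by
      rw [norm_mul, hnormpinv, Padic.norm_p_pow,
        zpow_sub₀ (ne_of_gt hp0), zpow_one, zpow_neg, div_eq_mul_inv, zpow_natCast]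
    have h00le : ‖((p:ℚ_[p]))⁻¹ * (p:ℚ_[p])^a‖ ≤ 1 := by
      rw [h00]
      exact zpow_le_one_of_nonpos₀ (le_of_lt hp1) (by omega)
    have h01 : ‖((p:ℚ_[p]))⁻¹ * β‖ ≤ 1 := by
      rw [norm_mul, hnormpinv]
      calc (p:ℝ) * ‖β‖ ≤ (p:ℝ) * (p:ℝ)⁻¹ :=
            mul_le_mul_of_nonneg_left hβ (le_of_lt hp0)
        _ = 1 := mul_inv_cancel₀ (ne_of_gt hp0)
    have hmem : memUm p a b c β γ₁ γ₂ !![((p : ℚ_[p]))⁻¹, 0; 0, 0] := by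
      refine ⟨?_, ?_, ?_, ?_⟩
      · rw [Matrix.IsSymm]
        ext i j
        fin_cases i <;> fin_cases j <;> simp [Matrix.transpose_apply]
      · intro i j
        rw [hmul]
        fin_cases i <;> fin_cases j
        · exact h00le
        · exact h01
        · show ‖(0:ℚ_[p])‖ ≤ 1; simp
        · show ‖(0:ℚ_[p])‖ ≤ 1; simp
      · rw [hmul]
        show ‖γ₁ * (((p:ℚ_[p]))⁻¹ * (p:ℚ_[p])^a) + γ₂ * 0‖ ≤ _
        rw [mul_zero, add_zero, norm_mul, h00]
        calc ‖γ₁‖ * (p:ℝ)^(1-(a:ℤ)) ≤ (p:ℝ)⁻¹ * (p:ℝ)^(1-(a:ℤ)) :=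
              mul_le_mul_of_nonneg_right hγ (zpow_nonneg (le_of_lt hp0) _)
          _ = (p:ℝ)^(-(a:ℤ)) := by
              rw [← zpow_neg_one, ← zpow_add₀ (ne_of_gt hp0)]; ring_nf
          _ ≤ (p:ℝ)^(-(c:ℤ)) := zpow_le_zpow_right₀ (le_of_lt hp1) (by omega)
      · rw [hmul]
        show ‖γ₁ * (((p:ℚ_[p]))⁻¹ * β) + γ₂ * 0‖ ≤ _
        rw [mul_zero, add_zero, norm_mul, norm_mul, hnormpinv]
        calc ‖γ₁‖ * ((p:ℝ) * ‖β‖) ≤ (p:ℝ)⁻¹ * ((p:ℝ) * (p:ℝ)^(-(c:ℤ))) := by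
              apply mul_le_mul hγ (mul_le_mul_of_nonneg_left hβc (le_of_lt hp0))
                (by positivity) (by positivity)
          _ = (p:ℝ)^(-(c:ℤ)) := by
              rw [← mul_assoc, inv_mul_cancel₀ (ne_of_gt hp0), one_mul]
          _ ≤ (p:ℝ)^(-((b:ℤ) ⊓ (c:ℤ))) := zpow_le_zpow_right₀ (le_of_lt hp1) (by omega)
    refine ⟨hmem, ?_⟩
    intro H
    have h1 : ψ (-D * ((p:ℚ_[p]))⁻¹ + 0) = 1 := H _ hmem
    rw [add_zero, hψtriv, norm_mul, norm_neg, hD, one_mul, hnormpinv] at h1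
    linarith
  refine ⟨key, ?_⟩
  intro H
  by_contra hcon
  push_neg at hcon
  obtain ⟨ha0, hβ1, hγ1⟩ := hcon
  have hsmall : ∀ x : ℚ_[p], ‖x‖ ≤ 1 → ‖x‖ ≠ 1 → ‖x‖ ≤ (p:ℝ)⁻¹ := by
    intro x hx hx1
    have h2 : ‖x‖ < (p:ℝ)^((-1:ℤ)+1) := by
      simpa using lt_of_le_of_ne hx hx1
    have h3 := (Padic.norm_le_pow_iff_norm_lt_pow_add_one x (-1)).mpr h2
    simpa using h3
  obtain ⟨hmem, hnot⟩ := key (by omega) (hsmall β hβint hβ1) (hsmall γ₁ hγ₁ hγ1)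
  exact hnot H
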